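/- Let κ₀ ∈ ℂ with κ₀ ≠ 0 and let R > 0. Suppose h_n^{(1)}(κ₀R) ≠ 0 and z_n^{(1)}(κ₀R) ≠ 0 for all integers n ≥ 1. For each n ≥ 1 let c_n^U be the complex derivative at κ₀ of the function κ ↦ κ·h_n^{(1)}(κR)/z_n^{(1)}(κR), and let c_n^V be the complex derivative at κ₀ of the function κ ↦ z_n^{(1)}(κR)/(κ·h_n^{(1)}(κR)) (both functions are complex differentiable in a neighborhood of κ₀). Then there exists a constant C > 0, depending only on κ₀ and R, such that for all families of complex numbers (a_n^m) and (b_n^m), indexed by integers n ≥ 1 and −n ≤ m ≤ n, one has ∑_{n=1}^{∞} ∑_{m=−n}^{n} [ (n(n+1))^{1/2} · |c_n^U|² · |a_n^m|² + (n(n+1))^{−1/2} · |c_n^V|² · |b_n^m|² ] ≤ C · ∑_{n=1}^{∞} ∑_{m=−n}^{n} [ (n(n+1))^{−1/2} · |a_n^m|² + (n(n+1))^{1/2} · |b_n^m|² ], where both sides are sums of nonnegative extended reals. -/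

import Mathlib

open Complex NNReal ENNReal Finset Filter Topology

/-- Spherical Hankel function of the first kind (Rayleigh closed form). -/
noncomputable def sphHankel (n : ℕ) (z : ℂ) : ℂ :=
  (-Complex.I) ^ (n + 1) * (Complex.exp (Complex.I * z) / z) *
    ∑ k ∈ Finset.range (n + 1),
      (Complex.I ^ k / ((Nat.factorial k : ℂ) * (2 * z) ^ k)) *
        ((Nat.factorial (n + k) : ℂ) / (Nat.factorial (n - k) : ℂ))

/-- `z_n^{(1)}(z) = h_n^{(1)}(z) + z * h_n^{(1)'}(z)`. -/
noncomputable def zfun (n : ℕ) (z : ℂ) : ℂ :=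
  sphHankel n z + z * deriv (sphHankel n) z

/-- `n(n+1)` as a nonnegative extended real. -/
noncomputable def lam (n : ℕ) : ℝ≥0∞ := ((n * (n + 1) : ℕ) : ℝ≥0∞)

noncomputable def Acoef (n k : ℕ) : ℂ :=
  Complex.I ^ k * (Nat.factorial (n + k) : ℂ) /
    ((Nat.factorial k : ℂ) * (Nat.factorial (n - k) : ℂ) * 2 ^ k)

noncomputable def Sfun (n : ℕ) (z : ℂ) : ℂ :=
  ∑ k ∈ Finset.range (n + 1), Acoef n k * z ^ (-(k : ℤ))

noncomputable def Tfun (n : ℕ) (z : ℂ) : ℂ :=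
  ∑ k ∈ Finset.range (n + 1), Acoef n k * (-(k : ℂ)) * z ^ (-(k : ℤ) - 1)

noncomputable def T2fun (n : ℕ) (z : ℂ) : ℂ :=
  ∑ k ∈ Finset.range (n + 1), Acoef n k * ((k : ℂ) * ((k : ℂ) + 1)) * z ^ (-(k : ℤ) - 2)

lemma sphHankel_eq (n : ℕ) {z : ℂ} (hz : z ≠ 0) :
    sphHankel n z = (-Complex.I) ^ (n + 1) * Complex.exp (Complex.I * z) * (z⁻¹ * Sfun n z) := by
  unfold sphHankel Sfun
  rw [Finset.mul_sum, Finset.mul_sum]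
  rw [Finset.mul_sum]
  refine Finset.sum_congr rfl fun k _ => ?_
  have hzk : z ^ k ≠ 0 := pow_ne_zero _ hz
  unfold Acoef
  rw [zpow_neg, zpow_natCast]
  field_simp
  ring

lemma hasDerivAt_Sfun (n : ℕ) {z : ℂ} (hz : z ≠ 0) :
    HasDerivAt (Sfun n) (Tfun n z) z := by
  unfold Sfun Tfun
  apply HasDerivAt.fun_sum
  intro k _
  have h := (hasDerivAt_zpow (-(k : ℤ)) z (Or.inl hz)).const_mul (Acoef n k)
  convert h using 1
  · rfl
  push_cast
  ring

lemma hasDerivAt_Tfun (n : ℕ) {z : ℂ} (hz : z ≠ 0) :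
    HasDerivAt (Tfun n) (T2fun n z) z := by
  unfold Tfun T2fun
  apply HasDerivAt.fun_sum
  intro k _
  have h := (hasDerivAt_zpow (-(k : ℤ) - 1) z (Or.inl hz)).const_mul (Acoef n k * (-(k : ℂ)))
  convert h using 1
  · rfl
  rw [show -(k : ℤ) - 1 - 1 = -(k:ℤ) - 2 by ring]
  push_cast
  ring

open Filter in
lemma sph_eventually (n : ℕ) {z : ℂ} (hz : z ≠ 0) :
    (fun z => (-Complex.I) ^ (n + 1) * (Complex.exp (Complex.I * z) * (z⁻¹ * Sfun n z)))
      =ᶠ[nhds z] sphHankel n := by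
  filter_upwards [isOpen_compl_singleton.mem_nhds (by simpa using hz)] with x hx
  rw [sphHankel_eq n (by simpa using hx)]
  ring

lemma hasDerivAt_sphHankel (n : ℕ) {z : ℂ} (hz : z ≠ 0) :
    HasDerivAt (sphHankel n)
      ((-Complex.I) ^ (n + 1) *
        (Complex.exp (Complex.I * z) * Complex.I * (z⁻¹ * Sfun n z) +
          Complex.exp (Complex.I * z) * (-(z ^ 2)⁻¹ * Sfun n z + z⁻¹ * Tfun n z))) z := by
  have h1 : HasDerivAt (fun z : ℂ => Complex.exp (Complex.I * z))
      (Complex.exp (Complex.I * z) * Complex.I) z := by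
    simpa using ((hasDerivAt_id z).const_mul Complex.I).cexp
  have h2 : HasDerivAt (fun z : ℂ => z⁻¹ * Sfun n z)
      (-(z ^ 2)⁻¹ * Sfun n z + z⁻¹ * Tfun n z) z :=
    (hasDerivAt_inv hz).mul (hasDerivAt_Sfun n hz)
  exact (HasDerivAt.congr_of_eventuallyEq ((h1.mul h2).const_mul _)
    (sph_eventually n hz).symm)

lemma zfun_eq (n : ℕ) {z : ℂ} (hz : z ≠ 0) :
    zfun n z = (-Complex.I) ^ (n + 1) * Complex.exp (Complex.I * z) *
      (Complex.I * Sfun n z + Tfun n z) := by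
  unfold zfun
  rw [(hasDerivAt_sphHankel n hz).deriv, sphHankel_eq n hz]
  have hy : z * z⁻¹ = 1 := mul_inv_cancel₀ hz
  linear_combination ((-Complex.I)^(n+1) * Complex.exp (Complex.I*z) *
    (Complex.I * Sfun n z + Tfun n z - z⁻¹ * Sfun n z)) * hy

lemma deriv_fU (n : ℕ) {κ₀ : ℂ} (hκ : κ₀ ≠ 0) {R : ℝ} (hR : 0 < R)
    (hden : Complex.I * Sfun n (κ₀ * R) + Tfun n (κ₀ * R) ≠ 0) :
    deriv (fun κ : ℂ => κ * sphHankel n (κ * R) / zfun n (κ * R)) κ₀ =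
      ((Tfun n (κ₀ * R)) ^ 2 - Sfun n (κ₀ * R) * T2fun n (κ₀ * R)) /
        (Complex.I * Sfun n (κ₀ * R) + Tfun n (κ₀ * R)) ^ 2 := by
  have hRC : (R : ℂ) ≠ 0 := by
    simpa using ne_of_gt hR
  have hw : κ₀ * (R : ℂ) ≠ 0 := mul_ne_zero hκ hRC
  have hS := hasDerivAt_Sfun n hw
  have hT := hasDerivAt_Tfun n hw
  have hd : HasDerivAt (fun z => Complex.I * Sfun n z + Tfun n z)
      (Complex.I * Tfun n (κ₀ * R) + T2fun n (κ₀ * R)) (κ₀ * R) :=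
    (hS.const_mul Complex.I).add hT
  have hq := hS.div hd hden
  have hlin : HasDerivAt (fun κ : ℂ => κ * (R : ℂ)) (R : ℂ) κ₀ := hasDerivAt_mul_const _
  have hcomp := (HasDerivAt.comp κ₀ hq hlin).const_mul ((R : ℂ)⁻¹)
  have hev : (fun κ : ℂ => κ * sphHankel n (κ * R) / zfun n (κ * R)) =ᶠ[nhds κ₀]
      (fun κ : ℂ => (R : ℂ)⁻¹ *
        ((fun z => Sfun n z / (Complex.I * Sfun n z + Tfun n z)) ∘ fun κ : ℂ => κ * (R : ℂ)) κ) := by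
    filter_upwards [isOpen_compl_singleton.mem_nhds (by simpa using hκ)] with x hx
    have hx0 : x ≠ 0 := by simpa using hx
    have hxw : x * (R : ℂ) ≠ 0 := mul_ne_zero hx0 hRC
    have hc : (-Complex.I) ^ (n + 1) * Complex.exp (Complex.I * (x * R)) ≠ 0 :=
      mul_ne_zero (pow_ne_zero _ (neg_ne_zero.mpr Complex.I_ne_zero)) (Complex.exp_ne_zero _)
    simp only [Function.comp_apply]
    rw [sphHankel_eq n hxw, zfun_eq n hxw]
    have key : x * ((-Complex.I) ^ (n + 1) * Complex.exp (Complex.I * (x * R)) *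
        ((x * (R : ℂ))⁻¹ * Sfun n (x * R))) =
        ((-Complex.I) ^ (n + 1) * Complex.exp (Complex.I * (x * R))) *
          ((R : ℂ)⁻¹ * Sfun n (x * R)) := by
      field_simp
    rw [key, mul_div_mul_left _ _ hc, mul_div_assoc]
  rw [(hcomp.congr_of_eventuallyEq hev).deriv]
  rw [mul_comm _ ((R : ℂ)), ← mul_assoc, inv_mul_cancel₀ hRC, one_mul]
  congr 1
  ring

lemma deriv_fV (n : ℕ) {κ₀ : ℂ} (hκ : κ₀ ≠ 0) {R : ℝ} (hR : 0 < R)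
    (hSw : Sfun n (κ₀ * R) ≠ 0) :
    deriv (fun κ : ℂ => zfun n (κ * R) / (κ * sphHankel n (κ * R))) κ₀ =
      (R : ℂ) ^ 2 * (Sfun n (κ₀ * R) * T2fun n (κ₀ * R) - (Tfun n (κ₀ * R)) ^ 2) /
        (Sfun n (κ₀ * R)) ^ 2 := by
  have hRC : (R : ℂ) ≠ 0 := by
    simpa using ne_of_gt hR
  have hw : κ₀ * (R : ℂ) ≠ 0 := mul_ne_zero hκ hRC
  have hS := hasDerivAt_Sfun n hw
  have hT := hasDerivAt_Tfun n hw
  have hd : HasDerivAt (fun z => Complex.I * Sfun n z + Tfun n z)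
      (Complex.I * Tfun n (κ₀ * R) + T2fun n (κ₀ * R)) (κ₀ * R) :=
    (hS.const_mul Complex.I).add hT
  have hq := hd.div hS hSw
  have hlin : HasDerivAt (fun κ : ℂ => κ * (R : ℂ)) (R : ℂ) κ₀ := hasDerivAt_mul_const _
  have hcomp := (HasDerivAt.comp κ₀ hq hlin).const_mul ((R : ℂ))
  have hev : (fun κ : ℂ => zfun n (κ * R) / (κ * sphHankel n (κ * R))) =ᶠ[nhds κ₀]
      (fun κ : ℂ => (R : ℂ) *
        ((fun z => (Complex.I * Sfun n z + Tfun n z) / Sfun n z) ∘ fun κ : ℂ => κ * (R : ℂ)) κ) := by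
    filter_upwards [isOpen_compl_singleton.mem_nhds (by simpa using hκ)] with x hx
    have hx0 : x ≠ 0 := by simpa using hx
    have hxw : x * (R : ℂ) ≠ 0 := mul_ne_zero hx0 hRC
    have hc : (-Complex.I) ^ (n + 1) * Complex.exp (Complex.I * (x * R)) ≠ 0 :=
      mul_ne_zero (pow_ne_zero _ (neg_ne_zero.mpr Complex.I_ne_zero)) (Complex.exp_ne_zero _)
    simp only [Function.comp_apply]
    rw [sphHankel_eq n hxw, zfun_eq n hxw]
    have key : x * ((-Complex.I) ^ (n + 1) * Complex.exp (Complex.I * (x * R)) *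
        ((x * (R : ℂ))⁻¹ * Sfun n (x * R))) =
        ((-Complex.I) ^ (n + 1) * Complex.exp (Complex.I * (x * R))) *
          ((R : ℂ)⁻¹ * Sfun n (x * R)) := by
      field_simp
    rw [key, mul_div_mul_left _ _ hc]
    rw [div_eq_mul_inv, mul_inv, inv_inv, div_eq_mul_inv]
    ring
  rw [(hcomp.congr_of_eventuallyEq hev).deriv]
  field_simp
  ring

noncomputable def tc (w : ℂ) (n k : ℕ) : ℂ := Acoef n k * w ^ (-(k : ℤ))

lemma tc_ne_zero {w : ℂ} (hw : w ≠ 0) (n k : ℕ) : tc w n k ≠ 0 := by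
  unfold tc Acoef
  apply mul_ne_zero
  · apply div_ne_zero
    · exact mul_ne_zero (pow_ne_zero _ Complex.I_ne_zero)
        (Nat.cast_ne_zero.mpr (Nat.factorial_ne_zero _))
    · exact mul_ne_zero (mul_ne_zero (Nat.cast_ne_zero.mpr (Nat.factorial_ne_zero _))
        (Nat.cast_ne_zero.mpr (Nat.factorial_ne_zero _))) (pow_ne_zero _ two_ne_zero)
  · exact zpow_ne_zero _ hw

lemma norm_tc {w : ℂ} (hw : w ≠ 0) (n k : ℕ) :
    ‖tc w n k‖ = (Nat.factorial (n + k) : ℝ) /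
      ((Nat.factorial k : ℝ) * (Nat.factorial (n - k) : ℝ) * (2 * ‖w‖) ^ k) := by
  have hW : (0 : ℝ) < ‖w‖ := norm_pos_iff.mpr hw
  unfold tc
  rw [norm_mul]
  have h1 : ‖Acoef n k‖ = (Nat.factorial (n + k) : ℝ) /
      ((Nat.factorial k : ℝ) * (Nat.factorial (n - k) : ℝ) * 2 ^ k) := by
    unfold Acoef
    rw [norm_div, norm_mul, norm_mul, norm_mul, norm_pow, norm_pow]
    simp
  have h2 : ‖w ^ (-(k : ℤ))‖ = (‖w‖ ^ k)⁻¹ := by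
    rw [norm_zpow, zpow_neg, zpow_natCast]
  rw [h1, h2, mul_pow]
  have f1 : (Nat.factorial k : ℝ) ≠ 0 := Nat.cast_ne_zero.mpr (Nat.factorial_ne_zero _)
  have f2 : (Nat.factorial (n - k) : ℝ) ≠ 0 := Nat.cast_ne_zero.mpr (Nat.factorial_ne_zero _)
  field_simp

lemma fact_key (n k : ℕ) (hk : k ≤ n) :
    (Nat.factorial (n + k)) * Nat.factorial n ≤ Nat.factorial (2 * n) * Nat.factorial k := by
  have h1 : (n + k).choose k ≤ (2 * n).choose k := Nat.choose_le_choose k (by omega)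
  have h2 : (2 * n).choose k ≤ (2 * n).choose n := by
    have := Nat.choose_le_middle k (2 * n)
    simpa [Nat.mul_div_cancel_left n (by norm_num : 0 < 2)] using this
  have e1 : (n + k).choose k * (Nat.factorial k * Nat.factorial n) = Nat.factorial (n + k) := by
    have := Nat.choose_mul_factorial_mul_factorial (Nat.le_add_left k n)
    simpa [Nat.add_sub_cancel, mul_assoc] using this
  have e2 : (2 * n).choose n * (Nat.factorial n * Nat.factorial n) = Nat.factorial (2 * n) := by
    have := Nat.choose_mul_factorial_mul_factorial (show n ≤ 2 * n by omega)
    simpa [show 2 * n - n = n by omega, mul_assoc] using this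
  calc Nat.factorial (n + k) * Nat.factorial n
      = (n + k).choose k * (Nat.factorial k * Nat.factorial n) * Nat.factorial n := by rw [e1]
    _ ≤ (2 * n).choose n * (Nat.factorial k * Nat.factorial n) * Nat.factorial n := by
        have := le_trans h1 h2
        exact Nat.mul_le_mul_right _ (Nat.mul_le_mul_right _ this)
    _ = Nat.factorial (2 * n) * Nat.factorial k := by rw [← e2]; ring

lemma tc_le {w : ℂ} (hw : w ≠ 0) (n k : ℕ) (hk : k ≤ n) :
    ‖tc w n k‖ ≤ ‖tc w n n‖ * ((2 * ‖w‖) ^ (n - k) / (Nat.factorial (n - k) : ℝ)) := by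
  have hW : (0 : ℝ) < ‖w‖ := norm_pos_iff.mpr hw
  have h2W : (0 : ℝ) < 2 * ‖w‖ := by linarith
  rw [norm_tc hw, norm_tc hw]
  have hpow : (2 * ‖w‖) ^ n = (2 * ‖w‖) ^ k * (2 * ‖w‖) ^ (n - k) := by
    rw [← pow_add]
    congr 1
    omega
  have hRHS : (Nat.factorial (n + n) : ℝ) /
      ((Nat.factorial n : ℝ) * (Nat.factorial (n - n) : ℝ) * (2 * ‖w‖) ^ n) *
      ((2 * ‖w‖) ^ (n - k) / (Nat.factorial (n - k) : ℝ)) =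
      (Nat.factorial (2 * n) : ℝ) /
        ((Nat.factorial n : ℝ) * (Nat.factorial (n - k) : ℝ) * (2 * ‖w‖) ^ k) := by
    rw [Nat.sub_self, Nat.factorial_zero, hpow, show n + n = 2 * n by ring,
      div_mul_div_comm]
    rw [show ((Nat.factorial n : ℝ) * ((1 : ℕ) : ℝ) * ((2 * ‖w‖) ^ k * (2 * ‖w‖) ^ (n - k)) *
        (Nat.factorial (n - k) : ℝ)) = ((Nat.factorial n : ℝ) * (Nat.factorial (n - k) : ℝ) *
        (2 * ‖w‖) ^ k) * (2 * ‖w‖) ^ (n - k) by push_cast; ring]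
    exact mul_div_mul_right _ _ (by positivity)
  rw [hRHS]
  rw [div_le_div_iff₀ (by positivity) (by positivity)]
  have key := fact_key n k hk
  have keyR : (Nat.factorial (n + k) : ℝ) * (Nat.factorial n : ℝ) ≤
      (Nat.factorial (2 * n) : ℝ) * (Nat.factorial k : ℝ) := by
    exact_mod_cast key
  have hnn : (0 : ℝ) ≤ (Nat.factorial (n - k) : ℝ) * (2 * ‖w‖) ^ k := by positivity
  calc (Nat.factorial (n + k) : ℝ) * ((Nat.factorial n : ℝ) * (Nat.factorial (n - k) : ℝ) * (2 * ‖w‖) ^ k)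
      = ((Nat.factorial (n + k) : ℝ) * (Nat.factorial n : ℝ)) * ((Nat.factorial (n - k) : ℝ) * (2 * ‖w‖) ^ k) := by ring
    _ ≤ ((Nat.factorial (2 * n) : ℝ) * (Nat.factorial k : ℝ)) * ((Nat.factorial (n - k) : ℝ) * (2 * ‖w‖) ^ k) :=
        mul_le_mul_of_nonneg_right keyR hnn
    _ = (Nat.factorial (2 * n) : ℝ) * ((Nat.factorial k : ℝ) * (Nat.factorial (n - k) : ℝ) * (2 * ‖w‖) ^ k) := by ring

noncomputable def sig0 (w : ℂ) (n : ℕ) : ℂ := ∑ k ∈ Finset.range (n + 1), tc w n k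
noncomputable def sig1 (w : ℂ) (n : ℕ) : ℂ :=
  ∑ k ∈ Finset.range (n + 1), ((n - k : ℕ) : ℂ) * tc w n k
noncomputable def sig2 (w : ℂ) (n : ℕ) : ℂ :=
  ∑ k ∈ Finset.range (n + 1), ((n - k : ℕ) : ℂ) ^ 2 * tc w n k

lemma sum_tc_bound {w : ℂ} (hw : w ≠ 0) (n : ℕ) (φ : ℕ → ℂ)
    (hφ : ∀ k, k ≤ n → ‖φ k‖ ≤ 4 ^ (n - k)) :
    ‖∑ k ∈ Finset.range (n + 1), φ k * tc w n k‖ ≤ ‖tc w n n‖ * Real.exp (8 * ‖w‖) := by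
  have hW : (0 : ℝ) < ‖w‖ := norm_pos_iff.mpr hw
  calc ‖∑ k ∈ Finset.range (n + 1), φ k * tc w n k‖
      ≤ ∑ k ∈ Finset.range (n + 1), ‖φ k * tc w n k‖ := norm_sum_le _ _
    _ ≤ ∑ k ∈ Finset.range (n + 1), ‖tc w n n‖ * ((8 * ‖w‖) ^ (n - k) / (Nat.factorial (n - k) : ℝ)) := by
        apply Finset.sum_le_sum
        intro k hk
        have hk' : k ≤ n := by
          have := Finset.mem_range.mp hk; omega
        rw [norm_mul]
        calc ‖φ k‖ * ‖tc w n k‖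
            ≤ (4 ^ (n - k)) * (‖tc w n n‖ * ((2 * ‖w‖) ^ (n - k) / (Nat.factorial (n - k) : ℝ))) :=
              mul_le_mul (hφ k hk') (tc_le hw n k hk') (norm_nonneg _) (by positivity)
          _ = ‖tc w n n‖ * ((8 * ‖w‖) ^ (n - k) / (Nat.factorial (n - k) : ℝ)) := by
              have h8 : ((8 : ℝ) * ‖w‖) ^ (n - k) = 4 ^ (n - k) * (2 * ‖w‖) ^ (n - k) := by
                rw [← mul_pow]; congr 1; ring
              rw [h8]; ring
    _ = ‖tc w n n‖ * ∑ k ∈ Finset.range (n + 1), ((8 * ‖w‖) ^ (n - k) / (Nat.factorial (n - k) : ℝ)) := by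
        rw [Finset.mul_sum]
    _ = ‖tc w n n‖ * ∑ j ∈ Finset.range (n + 1), ((8 * ‖w‖) ^ j / (Nat.factorial j : ℝ)) := by
        congr 1
        have := Finset.sum_range_reflect (fun j => (8 * ‖w‖) ^ j / (Nat.factorial j : ℝ)) (n + 1)
        simpa [Nat.add_sub_cancel] using this
    _ ≤ ‖tc w n n‖ * Real.exp (8 * ‖w‖) := by
        apply mul_le_mul_of_nonneg_left _ (norm_nonneg _)
        exact Real.sum_le_exp_of_nonneg (by positivity) (n + 1)

lemma nat_le_four_pow (m : ℕ) : (m : ℝ) ≤ 4 ^ m := by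
  calc (m : ℝ) ≤ 2 ^ m := by exact_mod_cast (Nat.lt_two_pow_self (n := m)).le
    _ ≤ 4 ^ m := pow_le_pow_left₀ (by norm_num) (by norm_num) m

lemma nat_sq_le_four_pow (m : ℕ) : ((m : ℝ)) ^ 2 ≤ 4 ^ m := by
  have h : (m : ℝ) ≤ 2 ^ m := by exact_mod_cast (Nat.lt_two_pow_self (n := m)).le
  calc ((m : ℝ)) ^ 2 ≤ ((2 : ℝ) ^ m) ^ 2 := by
        apply pow_le_pow_left₀ (by positivity) h
    _ = 4 ^ m := by rw [← pow_mul, mul_comm, pow_mul]; norm_num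

lemma norm_sig0_le {w : ℂ} (hw : w ≠ 0) (n : ℕ) :
    ‖sig0 w n‖ ≤ ‖tc w n n‖ * Real.exp (8 * ‖w‖) := by
  have := sum_tc_bound hw n (fun _ => 1) (fun k _ => by simpa using one_le_pow₀ (by norm_num : (1:ℝ) ≤ 4))
  simpa [sig0] using this

lemma norm_sig1_le {w : ℂ} (hw : w ≠ 0) (n : ℕ) :
    ‖sig1 w n‖ ≤ ‖tc w n n‖ * Real.exp (8 * ‖w‖) := by
  have := sum_tc_bound hw n (fun k => ((n - k : ℕ) : ℂ)) (fun k _ => by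
    rw [Complex.norm_natCast]; exact nat_le_four_pow _)
  simpa [sig1] using this

lemma norm_sig2_le {w : ℂ} (hw : w ≠ 0) (n : ℕ) :
    ‖sig2 w n‖ ≤ ‖tc w n n‖ * Real.exp (8 * ‖w‖) := by
  have := sum_tc_bound hw n (fun k => ((n - k : ℕ) : ℂ) ^ 2) (fun k _ => by
    rw [norm_pow, Complex.norm_natCast]; exact nat_sq_le_four_pow _)
  simpa [sig2] using this

lemma Sfun_eq_sig (w : ℂ) (n : ℕ) : Sfun n w = sig0 w n := rfl

lemma Tfun_eq_sig {w : ℂ} (hw : w ≠ 0) (n : ℕ) :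
    Tfun n w = w⁻¹ * (sig1 w n - (n : ℂ) * sig0 w n) := by
  have : w⁻¹ * (sig1 w n - (n : ℂ) * sig0 w n) =
      ∑ k ∈ Finset.range (n + 1), w⁻¹ * (((n - k : ℕ) : ℂ) - (n : ℂ)) * tc w n k := by
    unfold sig1 sig0
    rw [Finset.mul_sum, ← Finset.sum_sub_distrib, Finset.mul_sum]
    exact Finset.sum_congr rfl fun k _ => by ring
  rw [this]
  unfold Tfun
  refine Finset.sum_congr rfl fun k hk => ?_
  have hk' : k ≤ n := by have := Finset.mem_range.mp hk; omega
  rw [Nat.cast_sub hk']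
  unfold tc
  rw [zpow_sub_one₀ hw]
  ring

lemma T2fun_eq_sig {w : ℂ} (hw : w ≠ 0) (n : ℕ) :
    T2fun n w = (w⁻¹) ^ 2 * ((n : ℂ) * ((n : ℂ) + 1) * sig0 w n
      - (2 * (n : ℂ) + 1) * sig1 w n + sig2 w n) := by
  have : (w⁻¹) ^ 2 * ((n : ℂ) * ((n : ℂ) + 1) * sig0 w n
      - (2 * (n : ℂ) + 1) * sig1 w n + sig2 w n) =
      ∑ k ∈ Finset.range (n + 1), (w⁻¹) ^ 2 *
        ((n : ℂ) * ((n : ℂ) + 1) - (2 * (n : ℂ) + 1) * ((n - k : ℕ) : ℂ)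
          + ((n - k : ℕ) : ℂ) ^ 2) * tc w n k := by
    unfold sig1 sig0 sig2
    rw [Finset.mul_sum, Finset.mul_sum, ← Finset.sum_sub_distrib, ← Finset.sum_add_distrib,
      Finset.mul_sum]
    exact Finset.sum_congr rfl fun k _ => by ring
  rw [this]
  unfold T2fun
  refine Finset.sum_congr rfl fun k hk => ?_
  have hk' : k ≤ n := by have := Finset.mem_range.mp hk; omega
  rw [Nat.cast_sub hk']
  unfold tc
  rw [show -(k : ℤ) - 2 = -(k : ℤ) - 1 - 1 by ring, zpow_sub_one₀ hw, zpow_sub_one₀ hw]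
  ring

lemma D_bound {w : ℂ} (hw : w ≠ 0) {n : ℕ} (hn : 1 ≤ n) :
    ‖Sfun n w * T2fun n w - (Tfun n w) ^ 2‖ ≤
      (‖w‖⁻¹) ^ 2 * (4 * n * (‖tc w n n‖ * Real.exp (8 * ‖w‖)) ^ 2) := by
  have hid : Sfun n w * T2fun n w - (Tfun n w) ^ 2 = (w⁻¹) ^ 2 *
      ((n : ℂ) * sig0 w n ^ 2 - sig0 w n * sig1 w n + sig0 w n * sig2 w n - sig1 w n ^ 2) := by
    rw [Sfun_eq_sig, Tfun_eq_sig hw, T2fun_eq_sig hw]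
    ring
  rw [hid, norm_mul, norm_pow, norm_inv]
  apply mul_le_mul_of_nonneg_left _ (by positivity)
  set B := ‖tc w n n‖ * Real.exp (8 * ‖w‖) with hB
  have hB0 : 0 ≤ B := by positivity
  have h0 := norm_sig0_le hw n
  have h1 := norm_sig1_le hw n
  have h2 := norm_sig2_le hw n
  have hn1 : (1 : ℝ) ≤ (n : ℝ) := by exact_mod_cast hn
  calc ‖(n : ℂ) * sig0 w n ^ 2 - sig0 w n * sig1 w n + sig0 w n * sig2 w n - sig1 w n ^ 2‖
      ≤ ‖(n : ℂ) * sig0 w n ^ 2 - sig0 w n * sig1 w n + sig0 w n * sig2 w n‖ + ‖sig1 w n ^ 2‖ :=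
        norm_sub_le _ _
    _ ≤ ‖(n : ℂ) * sig0 w n ^ 2 - sig0 w n * sig1 w n‖ + ‖sig0 w n * sig2 w n‖ + ‖sig1 w n ^ 2‖ := by
        gcongr; exact norm_add_le _ _
    _ ≤ ‖(n : ℂ) * sig0 w n ^ 2‖ + ‖sig0 w n * sig1 w n‖ + ‖sig0 w n * sig2 w n‖ + ‖sig1 w n ^ 2‖ := by
        gcongr; exact norm_sub_le _ _
    _ ≤ (n : ℝ) * B ^ 2 + B * B + B * B + B ^ 2 := by
        gcongr ?_ + ?_ + ?_ + ?_
        · rw [norm_mul, norm_pow, Complex.norm_natCast]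
          gcongr
        · rw [norm_mul]; exact mul_le_mul h0 h1 (norm_nonneg _) hB0
        · rw [norm_mul]; exact mul_le_mul h0 h2 (norm_nonneg _) hB0
        · rw [norm_pow]; exact pow_le_pow_left₀ (norm_nonneg _) h1 2
    _ ≤ 4 * (n : ℝ) * B ^ 2 := by nlinarith [sq_nonneg B]

open Filter Topology

noncomputable def useq (w : ℂ) (j n : ℕ) : ℂ :=
  if j ≤ n then tc w n (n - j) / tc w n n else 0

lemma useq_norm_le {w : ℂ} (hw : w ≠ 0) (j n : ℕ) :
    ‖useq w j n‖ ≤ (2 * ‖w‖) ^ j / (Nat.factorial j : ℝ) := by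
  have hW : (0 : ℝ) < ‖w‖ := norm_pos_iff.mpr hw
  unfold useq
  split
  · rename_i hj
    rw [norm_div, div_le_iff₀ (norm_pos_iff.mpr (tc_ne_zero hw n n))]
    have h := tc_le hw n (n - j) (by omega)
    rw [show n - (n - j) = j by omega] at h
    calc ‖tc w n (n - j)‖ ≤ ‖tc w n n‖ * ((2 * ‖w‖) ^ j / (Nat.factorial j : ℝ)) := h
      _ = (2 * ‖w‖) ^ j / (Nat.factorial j : ℝ) * ‖tc w n n‖ := by ring
  · simp only [norm_zero]
    positivity

lemma descFactorial_cast_ne_zero {k n : ℕ} (hk : k ≤ n) : ((Nat.descFactorial n k : ℕ) : ℂ) ≠ 0 := by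
  rw [Nat.cast_ne_zero]
  intro h0
  have := Nat.factorial_mul_descFactorial hk
  rw [h0, mul_zero] at this
  exact Nat.factorial_ne_zero n this.symm

lemma useq_formula {w : ℂ} (hw : w ≠ 0) {j n : ℕ} (hj : j ≤ n) :
    useq w j n = ((-Complex.I) * w * 2) ^ j / (Nat.factorial j : ℂ) *
      ((Nat.descFactorial n j : ℂ) / (Nat.descFactorial (2 * n) j : ℂ)) := by
  obtain ⟨m, rfl⟩ : ∃ m, n = m + j := ⟨n - j, by omega⟩
  unfold useq
  rw [if_pos hj]
  have key : tc w (m + j) (m + j - j) = tc w (m + j) (m + j) *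
      (((-Complex.I) * w * 2) ^ j / (Nat.factorial j : ℂ) *
        ((Nat.descFactorial (m + j) j : ℂ) / (Nat.descFactorial (2 * (m + j)) j : ℂ))) := by
    unfold tc Acoef
    rw [show m + j - j = m by omega]
    rw [show m + j + m = 2 * m + j by omega]
    rw [show m + j - m = j by omega]
    rw [show m + j + (m + j) = 2 * m + j + j by omega]
    rw [show m + j - (m + j) = 0 by omega]
    rw [show 2 * (m + j) = 2 * m + j + j by omega]
    rw [Nat.factorial_zero]
    have hIpow : Complex.I ^ (m + j) = Complex.I ^ m * Complex.I ^ j := pow_add _ _ _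
    have h2pow : (2 : ℂ) ^ (m + j) = 2 ^ m * 2 ^ j := pow_add _ _ _
    have hwpow : w ^ (-(m : ℤ)) = w ^ j * w ^ (-(m + j : ℕ) : ℤ) := by
      rw [← zpow_natCast w j, ← zpow_add₀ hw]
      congr 1
      omega
    have hneg : ((-Complex.I) * w * 2) ^ j = (Complex.I ^ j)⁻¹ * w ^ j * 2 ^ j := by
      rw [← Complex.inv_I, mul_pow, mul_pow, inv_pow]
    have hfac1 : ((Nat.factorial (m + j) : ℂ)) =
        (Nat.factorial m : ℂ) * ((m + j).descFactorial j : ℂ) := by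
      have h := Nat.factorial_mul_descFactorial (show j ≤ m + j by omega)
      rw [show m + j - j = m by omega] at h
      rw [← h]; push_cast; ring
    have hfac2 : ((Nat.factorial (2 * m + j + j) : ℂ)) =
        (Nat.factorial (2 * m + j) : ℂ) * ((2 * m + j + j).descFactorial j : ℂ) := by
      have h := Nat.factorial_mul_descFactorial (show j ≤ 2 * m + j + j by omega)
      rw [show 2 * m + j + j - j = 2 * m + j by omega] at h
      rw [← h]; push_cast; ring
    rw [hIpow, h2pow, hwpow, hneg, hfac1, hfac2]
    have n1 : (Nat.factorial m : ℂ) ≠ 0 := Nat.cast_ne_zero.mpr (Nat.factorial_ne_zero _)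
    have n2 : (Nat.factorial j : ℂ) ≠ 0 := Nat.cast_ne_zero.mpr (Nat.factorial_ne_zero _)
    have n3 : (Nat.factorial (2 * m + j) : ℂ) ≠ 0 := Nat.cast_ne_zero.mpr (Nat.factorial_ne_zero _)
    have n4 : ((m + j).descFactorial j : ℂ) ≠ 0 := descFactorial_cast_ne_zero (by omega)
    have n5 : ((2 * m + j + j).descFactorial j : ℂ) ≠ 0 := descFactorial_cast_ne_zero (by omega)
    have n6 : Complex.I ^ m ≠ 0 := pow_ne_zero _ Complex.I_ne_zero
    have n7 : Complex.I ^ j ≠ 0 := pow_ne_zero _ Complex.I_ne_zero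
    have n8 : (2 : ℂ) ^ m ≠ 0 := pow_ne_zero _ two_ne_zero
    have n9 : (2 : ℂ) ^ j ≠ 0 := pow_ne_zero _ two_ne_zero
    have n10 : w ^ (-(m + j : ℕ) : ℤ) ≠ 0 := zpow_ne_zero _ hw
    have n11 : w ^ j ≠ 0 := pow_ne_zero _ hw
    field_simp
    ring
  rw [key, mul_comm, mul_div_assoc, div_self (tc_ne_zero hw _ _), mul_one]

lemma inv_natCast_tendsto (i : ℕ) :
    Tendsto (fun n : ℕ => ((2 * n - i : ℕ) : ℂ)⁻¹) atTop (𝓝 0) := by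
  have h1 : Tendsto (fun n : ℕ => ((2 * n - i : ℕ) : ℝ)) atTop atTop := by
    apply tendsto_natCast_atTop_atTop.comp
    apply tendsto_atTop_mono' atTop ?_ tendsto_id
    filter_upwards [eventually_ge_atTop i] with n hn
    simp only [id]
    omega
  have h2 : Tendsto (fun n : ℕ => ((2 * n - i : ℕ) : ℝ)⁻¹) atTop (𝓝 0) :=
    h1.inv_tendsto_atTop
  have h3 := (Complex.continuous_ofReal.tendsto 0).comp h2
  simpa [Function.comp_def, Complex.ofReal_inv, Complex.ofReal_natCast] using h3

lemma factor_tendsto (i : ℕ) :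
    Tendsto (fun n : ℕ => ((n - i : ℕ) : ℂ) / ((2 * n - i : ℕ) : ℂ)) atTop (𝓝 (1 / 2)) := by
  have key : ∀ᶠ n : ℕ in atTop, ((n - i : ℕ) : ℂ) / ((2 * n - i : ℕ) : ℂ) =
      1 / 2 - ((i : ℂ) / 2) * ((2 * n - i : ℕ) : ℂ)⁻¹ := by
    filter_upwards [eventually_ge_atTop (i + 1)] with n hn
    have h2 : ((2 * n - i : ℕ) : ℂ) ≠ 0 := Nat.cast_ne_zero.mpr (by omega)
    have hc1 : ((n - i : ℕ) : ℂ) = (n : ℂ) - i := by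
      push_cast [Nat.cast_sub (show i ≤ n by omega)]; ring
    have hc2 : ((2 * n - i : ℕ) : ℂ) = 2 * (n : ℂ) - i := by
      push_cast [Nat.cast_sub (show i ≤ 2 * n by omega)]; ring
    have h2' : 2 * (n : ℂ) - (i : ℂ) ≠ 0 := by rw [← hc2]; exact h2
    rw [hc1, hc2]
    rw [div_eq_mul_inv]
    linear_combination (1/2 : ℂ) * mul_inv_cancel₀ h2'
  rw [tendsto_congr' key]
  have h0 : Tendsto (fun n : ℕ => ((i : ℂ) / 2) * ((2 * n - i : ℕ) : ℂ)⁻¹) atTop (𝓝 0) := by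
    simpa using (inv_natCast_tendsto i).const_mul ((i : ℂ) / 2)
  simpa using tendsto_const_nhds.sub h0

lemma useq_tendsto {w : ℂ} (hw : w ≠ 0) (j : ℕ) :
    Tendsto (fun n : ℕ => useq w j n) atTop (𝓝 ((-Complex.I * w) ^ j / (Nat.factorial j : ℂ))) := by
  have key : ∀ᶠ n : ℕ in atTop, useq w j n =
      ((-Complex.I) * w * 2) ^ j / (Nat.factorial j : ℂ) *
        ∏ i ∈ Finset.range j, (((n - i : ℕ) : ℂ) / ((2 * n - i : ℕ) : ℂ)) := by
    filter_upwards [eventually_ge_atTop j] with n hn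
    rw [useq_formula hw hn]
    congr 1
    rw [Nat.descFactorial_eq_prod_range, Nat.descFactorial_eq_prod_range]
    push_cast
    rw [Finset.prod_div_distrib]
  rw [tendsto_congr' key]
  have hprod : Tendsto (fun n : ℕ => ∏ i ∈ Finset.range j,
      (((n - i : ℕ) : ℂ) / ((2 * n - i : ℕ) : ℂ))) atTop (𝓝 (((1 : ℂ) / 2) ^ j)) := by
    have := tendsto_finset_prod (f := fun i (n : ℕ) => ((n - i : ℕ) : ℂ) / ((2 * n - i : ℕ) : ℂ))
      (a := fun _ => (1 : ℂ) / 2) (Finset.range j) (fun i _ => factor_tendsto i)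
    simpa using this
  have := hprod.const_mul (((-Complex.I) * w * 2) ^ j / (Nat.factorial j : ℂ))
  convert this using 2
  rw [div_mul_eq_mul_div, ← mul_pow]
  congr 2
  ring

lemma sig0_div_eq_tsum {w : ℂ} (hw : w ≠ 0) (n : ℕ) :
    sig0 w n / tc w n n = ∑' j : ℕ, useq w j n := by
  rw [tsum_eq_sum (s := Finset.range (n + 1)) (fun j hj => by
    unfold useq
    rw [if_neg]
    intro h
    exact hj (Finset.mem_range.mpr (by omega)))]
  have hrefl := Finset.sum_range_reflect (fun k => tc w n k / tc w n n) (n + 1)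
  calc sig0 w n / tc w n n = ∑ k ∈ Finset.range (n + 1), tc w n k / tc w n n := by
        unfold sig0; rw [Finset.sum_div]
    _ = ∑ j ∈ Finset.range (n + 1), tc w n (n - j) / tc w n n := by
        rw [← hrefl]
        exact Finset.sum_congr rfl fun j hj => by rw [Nat.add_sub_cancel]
    _ = ∑ j ∈ Finset.range (n + 1), useq w j n := by
        refine Finset.sum_congr rfl fun j hj => ?_
        unfold useq
        rw [if_pos (by have := Finset.mem_range.mp hj; omega)]

lemma sig0_div_tendsto {w : ℂ} (hw : w ≠ 0) :
    Tendsto (fun n : ℕ => sig0 w n / tc w n n) atTop (𝓝 (Complex.exp (-Complex.I * w))) := by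
  have hexp : Complex.exp (-Complex.I * w) = ∑' j : ℕ, (-Complex.I * w) ^ j / (Nat.factorial j : ℂ) := by
    rw [Complex.exp_eq_exp_ℂ, NormedSpace.exp_eq_tsum_div]
  rw [hexp]
  have := tendsto_tsum_of_dominated_convergence
    (f := fun (n : ℕ) (j : ℕ) => useq w j n)
    (g := fun j => (-Complex.I * w) ^ j / (Nat.factorial j : ℂ))
    (bound := fun j => (2 * ‖w‖) ^ j / (Nat.factorial j : ℝ))
    (Real.summable_pow_div_factorial (2 * ‖w‖))
    (fun j => useq_tendsto hw j)
    (Eventually.of_forall fun n j => useq_norm_le hw j n)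
  refine Tendsto.congr (fun n => (sig0_div_eq_tsum hw n).symm) this

noncomputable def Zc (w : ℂ) (n : ℕ) : ℂ :=
  (n : ℂ) * sig0 w n - sig1 w n - Complex.I * w * sig0 w n

lemma IST_eq_Zc {w : ℂ} (hw : w ≠ 0) (n : ℕ) :
    Complex.I * Sfun n w + Tfun n w = -w⁻¹ * Zc w n := by
  rw [Sfun_eq_sig, Tfun_eq_sig hw]
  unfold Zc
  field_simp
  ring

lemma exists_M1 {w : ℂ} (hw : w ≠ 0) :
    ∃ M1 : ℝ, ∀ n : ℕ, 1 ≤ n → Sfun n w ≠ 0 → ‖tc w n n‖ ≤ M1 * ‖Sfun n w‖ := by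
  have hL : ‖Complex.exp (-Complex.I * w)‖ ≠ 0 :=
    norm_ne_zero_iff.mpr (Complex.exp_ne_zero _)
  have h1 : Tendsto (fun n : ℕ => ‖sig0 w n / tc w n n‖⁻¹) atTop
      (𝓝 ‖Complex.exp (-Complex.I * w)‖⁻¹) :=
    ((sig0_div_tendsto hw).norm).inv₀ hL
  have h2 : ∀ n : ℕ, ‖sig0 w n / tc w n n‖⁻¹ = ‖tc w n n‖ / ‖sig0 w n‖ := by
    intro n
    rw [norm_div, inv_div]
  obtain ⟨M, hM⟩ := (h1.congr (fun n => h2 n)).bddAbove_range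
  refine ⟨M, fun n hn hS => ?_⟩
  have hSpos : 0 < ‖Sfun n w‖ := norm_pos_iff.mpr hS
  have := hM (Set.mem_range_self n)
  rw [Sfun_eq_sig] at *
  rw [div_le_iff₀ hSpos] at this
  linarith [this]

lemma nat_inv_C_tendsto : Tendsto (fun n : ℕ => ((n : ℂ))⁻¹) atTop (𝓝 0) := by
  have h3 := (Complex.continuous_ofReal.tendsto 0).comp (tendsto_inv_atTop_nhds_zero_nat (𝕜 := ℝ))
  simpa [Function.comp_def, Complex.ofReal_inv, Complex.ofReal_natCast] using h3

lemma exists_M2 {w : ℂ} (hw : w ≠ 0) :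
    ∃ M2 : ℝ, ∀ n : ℕ, 1 ≤ n → Zc w n ≠ 0 →
      (n : ℝ) * ‖tc w n n‖ ≤ M2 * ‖Zc w n‖ := by
  set L := Complex.exp (-Complex.I * w) with hLdef
  set E := Real.exp (8 * ‖w‖) with hEdef
  have hA := sig0_div_tendsto hw
  have hB : Tendsto (fun n : ℕ => (sig1 w n / tc w n n) * ((n : ℂ))⁻¹) atTop (𝓝 0) := by
    apply squeeze_zero_norm (a := fun n : ℕ => E * ((n : ℝ))⁻¹)
    · intro n
      rw [norm_mul, norm_inv, Complex.norm_natCast]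
      apply mul_le_mul_of_nonneg_right _ (by positivity)
      rw [norm_div, div_le_iff₀ (norm_pos_iff.mpr (tc_ne_zero hw n n))]
      calc ‖sig1 w n‖ ≤ ‖tc w n n‖ * E := norm_sig1_le hw n
        _ = E * ‖tc w n n‖ := by ring
    · simpa using (tendsto_inv_atTop_nhds_zero_nat (𝕜 := ℝ)).const_mul E
  have hC : Tendsto (fun n : ℕ => Complex.I * w * (sig0 w n / tc w n n) * ((n : ℂ))⁻¹)
      atTop (𝓝 0) := by
    have := ((hA.const_mul (Complex.I * w)).mul nat_inv_C_tendsto)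
    simpa using this
  have hQ : Tendsto (fun n : ℕ => Zc w n / ((n : ℂ) * tc w n n)) atTop (𝓝 L) := by
    have heq : ∀ᶠ n : ℕ in atTop, sig0 w n / tc w n n
        - (sig1 w n / tc w n n) * ((n : ℂ))⁻¹
        - Complex.I * w * (sig0 w n / tc w n n) * ((n : ℂ))⁻¹
        = Zc w n / ((n : ℂ) * tc w n n) := by
      filter_upwards [eventually_ge_atTop 1] with n hn
      have hn0 : ((n : ℂ)) ≠ 0 := Nat.cast_ne_zero.mpr (by omega)
      have ht0 := tc_ne_zero hw n n
      unfold Zc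
      field_simp
    have := (hA.sub hB).sub hC
    rw [sub_zero, sub_zero] at this
    exact this.congr' heq
  have h1 : Tendsto (fun n : ℕ => ‖Zc w n / ((n : ℂ) * tc w n n)‖⁻¹) atTop (𝓝 ‖L‖⁻¹) :=
    (hQ.norm).inv₀ (norm_ne_zero_iff.mpr (Complex.exp_ne_zero _))
  have h2 : ∀ n : ℕ, ‖Zc w n / ((n : ℂ) * tc w n n)‖⁻¹ = (n : ℝ) * ‖tc w n n‖ / ‖Zc w n‖ := by
    intro n
    rw [norm_div, inv_div, norm_mul, Complex.norm_natCast]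
  obtain ⟨M, hM⟩ := (h1.congr (fun n => h2 n)).bddAbove_range
  refine ⟨M, fun n hn hZ => ?_⟩
  have hZpos : 0 < ‖Zc w n‖ := norm_pos_iff.mpr hZ
  have := hM (Set.mem_range_self n)
  rw [div_le_iff₀ hZpos] at this
  linarith [this]

lemma cU_est {w : ℂ} (hw : w ≠ 0) {n : ℕ} (hn : 1 ≤ n) {M2 : ℝ} (hZne : Zc w n ≠ 0)
    (hM2 : (n : ℝ) * ‖tc w n n‖ ≤ M2 * ‖Zc w n‖) :
    (n : ℝ) * ‖((Tfun n w) ^ 2 - Sfun n w * T2fun n w) /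
      (Complex.I * Sfun n w + Tfun n w) ^ 2‖ ≤ 4 * M2 ^ 2 * Real.exp (8 * ‖w‖) ^ 2 := by
  have hW : (0 : ℝ) < ‖w‖ := norm_pos_iff.mpr hw
  have hZ : (0 : ℝ) < ‖Zc w n‖ := norm_pos_iff.mpr hZne
  rw [norm_div, norm_pow, IST_eq_Zc hw, norm_mul, norm_neg, norm_inv]
  rw [norm_sub_rev]
  rw [← mul_div_assoc, div_le_iff₀ (by positivity)]
  have hD := D_bound hw hn
  set E := Real.exp (8 * ‖w‖) with hE
  set t := ‖tc w n n‖ with ht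
  have ht0 : 0 ≤ t := norm_nonneg _
  calc (n : ℝ) * ‖Sfun n w * T2fun n w - Tfun n w ^ 2‖
      ≤ (n : ℝ) * ((‖w‖⁻¹) ^ 2 * (4 * n * (t * E) ^ 2)) := by
        apply mul_le_mul_of_nonneg_left hD (by positivity)
    _ = 4 * E ^ 2 * (‖w‖⁻¹) ^ 2 * ((n : ℝ) * t) ^ 2 := by ring
    _ ≤ 4 * E ^ 2 * (‖w‖⁻¹) ^ 2 * (M2 * ‖Zc w n‖) ^ 2 := by
        apply mul_le_mul_of_nonneg_left _ (by positivity)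
        apply pow_le_pow_left₀ (by positivity) hM2
    _ = 4 * M2 ^ 2 * E ^ 2 * (‖w‖⁻¹ * ‖Zc w n‖) ^ 2 := by ring

lemma cV_est {w : ℂ} (hw : w ≠ 0) {n : ℕ} (hn : 1 ≤ n) {R M1 : ℝ}
    (hSne : Sfun n w ≠ 0) (hM1 : ‖tc w n n‖ ≤ M1 * ‖Sfun n w‖) :
    ‖(R : ℂ) ^ 2 * (Sfun n w * T2fun n w - (Tfun n w) ^ 2) / (Sfun n w) ^ 2‖ ≤
      (4 * R ^ 2 * M1 ^ 2 * Real.exp (8 * ‖w‖) ^ 2 * (‖w‖⁻¹) ^ 2) * n := by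
  have hW : (0 : ℝ) < ‖w‖ := norm_pos_iff.mpr hw
  have hS : (0 : ℝ) < ‖Sfun n w‖ := norm_pos_iff.mpr hSne
  rw [norm_div, norm_mul, norm_pow, norm_pow, Complex.norm_real]
  rw [div_le_iff₀ (by positivity)]
  have hD := D_bound hw hn
  set E := Real.exp (8 * ‖w‖) with hE
  set t := ‖tc w n n‖ with ht
  have ht0 : 0 ≤ t := norm_nonneg _
  calc |R| ^ 2 * ‖Sfun n w * T2fun n w - Tfun n w ^ 2‖
      ≤ |R| ^ 2 * ((‖w‖⁻¹) ^ 2 * (4 * n * (t * E) ^ 2)) := by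
        apply mul_le_mul_of_nonneg_left hD (by positivity)
    _ = 4 * |R| ^ 2 * E ^ 2 * (‖w‖⁻¹) ^ 2 * (n : ℝ) * t ^ 2 := by ring
    _ ≤ 4 * |R| ^ 2 * E ^ 2 * (‖w‖⁻¹) ^ 2 * (n : ℝ) * (M1 * ‖Sfun n w‖) ^ 2 := by
        apply mul_le_mul_of_nonneg_left _ (by positivity)
        apply pow_le_pow_left₀ ht0 hM1
    _ = (4 * R ^ 2 * M1 ^ 2 * E ^ 2 * (‖w‖⁻¹) ^ 2) * n * ‖Sfun n w‖ ^ 2 := by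
        rw [← _root_.sq_abs R]; ring


lemma enn_term_le {lamE C : ℝ≥0∞} (hlam0 : lamE ≠ 0) (hlamT : lamE ≠ ⊤) {x y A B : ℝ≥0∞}
    (hx : lamE * x ^ 2 ≤ C) (hy : y ^ 2 ≤ C * lamE) :
    lamE ^ ((1 : ℝ) / 2) * x ^ 2 * A + lamE ^ (-(1 : ℝ) / 2) * y ^ 2 * B ≤
      C * (lamE ^ (-(1 : ℝ) / 2) * A + lamE ^ ((1 : ℝ) / 2) * B) := by
  have hsplit : lamE ^ ((1 : ℝ) / 2) = lamE ^ (-(1 : ℝ) / 2) * lamE := by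
    rw [show (1 : ℝ) / 2 = -(1 : ℝ) / 2 + 1 by norm_num, ENNReal.rpow_add _ _ hlam0 hlamT,
      ENNReal.rpow_one]
  have e1 : lamE ^ ((1 : ℝ) / 2) * x ^ 2 ≤ C * lamE ^ (-(1 : ℝ) / 2) := by
    calc lamE ^ ((1 : ℝ) / 2) * x ^ 2 = lamE ^ (-(1 : ℝ) / 2) * (lamE * x ^ 2) := by
          rw [hsplit]; ring
      _ ≤ lamE ^ (-(1 : ℝ) / 2) * C := mul_le_mul_right hx _
      _ = C * lamE ^ (-(1 : ℝ) / 2) := mul_comm _ _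
  have e2 : lamE ^ (-(1 : ℝ) / 2) * y ^ 2 ≤ C * lamE ^ ((1 : ℝ) / 2) := by
    calc lamE ^ (-(1 : ℝ) / 2) * y ^ 2 ≤ lamE ^ (-(1 : ℝ) / 2) * (C * lamE) :=
          mul_le_mul_right hy _
      _ = C * (lamE ^ (-(1 : ℝ) / 2) * lamE) := by ring
      _ = C * lamE ^ ((1 : ℝ) / 2) := by rw [← hsplit]
  calc lamE ^ ((1 : ℝ) / 2) * x ^ 2 * A + lamE ^ (-(1 : ℝ) / 2) * y ^ 2 * B
      ≤ (C * lamE ^ (-(1 : ℝ) / 2)) * A + (C * lamE ^ ((1 : ℝ) / 2)) * B :=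
        add_le_add (mul_le_mul_left e1 A) (mul_le_mul_left e2 B)
    _ = C * (lamE ^ (-(1 : ℝ) / 2) * A + lamE ^ ((1 : ℝ) / 2) * B) := by ring

lemma enn_sq_le {d : ℂ} {c : ℝ} (N : ℕ) (h : (N : ℝ) * ‖d‖ ^ 2 ≤ c) :
    (N : ℝ≥0∞) * ((‖d‖₊ : ℝ≥0∞)) ^ 2 ≤ ENNReal.ofReal c := by
  have he : (N : ℝ≥0∞) * ((‖d‖₊ : ℝ≥0∞)) ^ 2 = ENNReal.ofReal ((N : ℝ) * ‖d‖ ^ 2) := by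
    rw [ENNReal.ofReal_mul (by positivity), ENNReal.ofReal_natCast,
      ENNReal.ofReal_pow (norm_nonneg _), ofReal_norm, enorm_eq_nnnorm]
  rw [he]
  exact ENNReal.ofReal_le_ofReal h

lemma enn_sq_le' {d : ℂ} {c : ℝ} (hc : 0 ≤ c) (N : ℕ) (h : ‖d‖ ^ 2 ≤ c * N) :
    ((‖d‖₊ : ℝ≥0∞)) ^ 2 ≤ ENNReal.ofReal c * (N : ℝ≥0∞) := by
  rw [← ENNReal.ofReal_natCast N, ← ENNReal.ofReal_mul hc, ← enorm_eq_nnnorm, ← ofReal_norm,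
    ← ENNReal.ofReal_pow (norm_nonneg _)]
  exact ENNReal.ofReal_le_ofReal h

theorem dtn_derivative_coeff_bound (κ₀ : ℂ) (hκ₀ : κ₀ ≠ 0) (R : ℝ) (hR : 0 < R)
    (hh : ∀ n : ℕ, 1 ≤ n → sphHankel n (κ₀ * R) ≠ 0)
    (hz : ∀ n : ℕ, 1 ≤ n → zfun n (κ₀ * R) ≠ 0) :
    ∃ C : ℝ≥0∞, 0 < C ∧ C ≠ ⊤ ∧ ∀ a b : ℕ → ℤ → ℂ,
      (∑' k : ℕ, ∑ m ∈ Finset.Icc (-((k + 1 : ℕ) : ℤ)) ((k + 1 : ℕ) : ℤ),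
        (lam (k + 1) ^ ((1 : ℝ) / 2) *
            (‖deriv (fun κ : ℂ =>
                κ * sphHankel (k + 1) (κ * R) / zfun (k + 1) (κ * R)) κ₀‖₊ : ℝ≥0∞) ^ 2 *
            (‖a (k + 1) m‖₊ : ℝ≥0∞) ^ 2
          + lam (k + 1) ^ (-(1 : ℝ) / 2) *
            (‖deriv (fun κ : ℂ =>
                zfun (k + 1) (κ * R) / (κ * sphHankel (k + 1) (κ * R))) κ₀‖₊ : ℝ≥0∞) ^ 2 *
            (‖b (k + 1) m‖₊ : ℝ≥0∞) ^ 2))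
      ≤ C * ∑' k : ℕ, ∑ m ∈ Finset.Icc (-((k + 1 : ℕ) : ℤ)) ((k + 1 : ℕ) : ℤ),
          (lam (k + 1) ^ (-(1 : ℝ) / 2) * (‖a (k + 1) m‖₊ : ℝ≥0∞) ^ 2
            + lam (k + 1) ^ ((1 : ℝ) / 2) * (‖b (k + 1) m‖₊ : ℝ≥0∞) ^ 2) := by
  have hRC : (R : ℂ) ≠ 0 := by simpa using ne_of_gt hR
  have hw : κ₀ * (R : ℂ) ≠ 0 := mul_ne_zero hκ₀ hRC
  have hSne : ∀ n : ℕ, 1 ≤ n → Sfun n (κ₀ * R) ≠ 0 := by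
    intro n hn h0
    apply hh n hn
    rw [sphHankel_eq n hw, h0, mul_zero, mul_zero]
  have hISTne : ∀ n : ℕ, 1 ≤ n →
      Complex.I * Sfun n (κ₀ * R) + Tfun n (κ₀ * R) ≠ 0 := by
    intro n hn h0
    apply hz n hn
    rw [zfun_eq n hw, h0, mul_zero]
  have hZcne : ∀ n : ℕ, 1 ≤ n → Zc (κ₀ * R) n ≠ 0 := by
    intro n hn h0
    apply hISTne n hn
    rw [IST_eq_Zc hw, h0, mul_zero]
  obtain ⟨M1, hM1⟩ := exists_M1 hw
  obtain ⟨M2, hM2⟩ := exists_M2 hw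
  set E := Real.exp (8 * ‖κ₀ * (R : ℂ)‖) with hE
  set C1 : ℝ := 4 * M2 ^ 2 * E ^ 2 with hC1def
  set C2 : ℝ := 4 * R ^ 2 * M1 ^ 2 * E ^ 2 * (‖κ₀ * (R : ℂ)‖⁻¹) ^ 2 with hC2def
  have hC1 : 0 ≤ C1 := by positivity
  have hC2 : 0 ≤ C2 := by positivity
  set Cr : ℝ := 2 * C1 ^ 2 + C2 ^ 2 + 1 with hCrdef
  have hCr : 0 < Cr := by positivity
  refine ⟨ENNReal.ofReal Cr, ENNReal.ofReal_pos.mpr hCr, ENNReal.ofReal_ne_top, ?_⟩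
  intro a b
  rw [← ENNReal.tsum_mul_left]
  apply ENNReal.tsum_le_tsum
  intro k
  rw [Finset.mul_sum]
  apply Finset.sum_le_sum
  intro m _
  have hn : 1 ≤ k + 1 := Nat.le_add_left 1 k
  have hlam0 : lam (k + 1) ≠ 0 := by
    unfold lam
    simp only [ne_eq, Nat.cast_eq_zero]
    positivity
  have hlamT : lam (k + 1) ≠ ⊤ := ENNReal.natCast_ne_top _
  rw [deriv_fU (k + 1) hκ₀ hR (hISTne (k + 1) hn),
    deriv_fV (k + 1) hκ₀ hR (hSne (k + 1) hn)]
  apply enn_term_le hlam0 hlamT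
  · -- U part
    have hcU := cU_est hw hn (hZcne (k + 1) hn) (hM2 (k + 1) hn (hZcne (k + 1) hn))
    set d := ((Tfun (k + 1) (κ₀ * R)) ^ 2 - Sfun (k + 1) (κ₀ * R) * T2fun (k + 1) (κ₀ * R)) /
      (Complex.I * Sfun (k + 1) (κ₀ * R) + Tfun (k + 1) (κ₀ * R)) ^ 2 with hd
    have hreal : (((k + 1) * (k + 2) : ℕ) : ℝ) * ‖d‖ ^ 2 ≤ Cr := by
      have hn1 : (1 : ℝ) ≤ ((k + 1 : ℕ) : ℝ) := by exact_mod_cast hn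
      have hd0 : 0 ≤ ‖d‖ := norm_nonneg _
      have hsq : (((k + 1 : ℕ) : ℝ) * ‖d‖) ^ 2 ≤ C1 ^ 2 := by
        apply pow_le_pow_left₀ (by positivity) hcU
      have hcast : (((k + 1) * (k + 2) : ℕ) : ℝ) = ((k + 1 : ℕ) : ℝ) * (((k + 1 : ℕ) : ℝ) + 1) := by
        push_cast; ring
      rw [hcast]
      nlinarith [sq_nonneg ‖d‖, sq_nonneg C2, mul_pos (lt_of_lt_of_le one_pos hn1)
        (lt_of_lt_of_le one_pos hn1)]
    have := enn_sq_le ((k + 1) * (k + 2)) hreal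
    calc lam (k + 1) * ((‖d‖₊ : ℝ≥0∞)) ^ 2
        = (((k + 1) * (k + 2) : ℕ) : ℝ≥0∞) * ((‖d‖₊ : ℝ≥0∞)) ^ 2 := by
          unfold lam; push_cast; ring
      _ ≤ ENNReal.ofReal Cr := this
  · -- V part
    have hcV := cV_est hw hn (R := R) (hSne (k + 1) hn) (hM1 (k + 1) hn (hSne (k + 1) hn))
    set d := (R : ℂ) ^ 2 * (Sfun (k + 1) (κ₀ * R) * T2fun (k + 1) (κ₀ * R) -
      (Tfun (k + 1) (κ₀ * R)) ^ 2) / (Sfun (k + 1) (κ₀ * R)) ^ 2 with hd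
    have hreal : ‖d‖ ^ 2 ≤ Cr * (((k + 1) * (k + 2) : ℕ) : ℝ) := by
      have hn1 : (1 : ℝ) ≤ ((k + 1 : ℕ) : ℝ) := by exact_mod_cast hn
      have hd0 : 0 ≤ ‖d‖ := norm_nonneg _
      have hsq : ‖d‖ ^ 2 ≤ (C2 * ((k + 1 : ℕ) : ℝ)) ^ 2 := by
        apply pow_le_pow_left₀ hd0 hcV
      have hcast : (((k + 1) * (k + 2) : ℕ) : ℝ) = ((k + 1 : ℕ) : ℝ) * (((k + 1 : ℕ) : ℝ) + 1) := by
        push_cast; ring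
      rw [hcast]
      nlinarith [sq_nonneg C1, sq_nonneg (C2 * ((k + 1 : ℕ) : ℝ)), sq_nonneg ((k + 1 : ℕ) : ℝ)]
    have := enn_sq_le' (le_of_lt hCr) ((k + 1) * (k + 2)) hreal
    calc ((‖d‖₊ : ℝ≥0∞)) ^ 2 ≤ ENNReal.ofReal Cr * (((k + 1) * (k + 2) : ℕ) : ℝ≥0∞) := this
      _ = ENNReal.ofReal Cr * lam (k + 1) := by unfold lam; push_cast; ring
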